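/- Given a Schottky datum with r ≥ 1 generators, every cyclically admissible word gives a hyperbolic element: for every n ≥ 1 and every σ ∈ W_n, the matrix T_σ = S_{σ(0)} S_{σ(1)} ⋯ S_{σ(n−1)} satisfies |tr T_σ| > 2. In particular the geodesic length ℓ(T_σ) := 2 arccosh(|tr T_σ|/2) is well defined and strictly positive. -/

import Mathlib

/-- A Schottky datum with `r ≥ 1` generators: pairwise disjoint closed disks
`D̄ j = {z : dist z (center j) ≤ radius j}` (for `j ∈ ℤ/2rℤ`) centered on the real axis,
together with matrices `gen j ∈ SL(2,ℝ)` satisfying `gen (j + r) = (gen j)⁻¹`, such that for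
each `j` the Möbius transformation of `gen j` is defined on all of `ℂ ∖ D j` (the complement
of the open disk) and maps it into the open disk `D (j + r)`. -/
structure SchottkyDatum (r : ℕ) where
  center : ZMod (2 * r) → ℝ
  radius : ZMod (2 * r) → ℝ
  radius_pos : ∀ j, 0 < radius j
  disks_disjoint : ∀ i j, i ≠ j → ∀ z : ℂ,
    dist z (center i : ℂ) ≤ radius i → ¬ dist z (center j : ℂ) ≤ radius j
  gen : ZMod (2 * r) → Matrix.SpecialLinearGroup (Fin 2) ℝ
  gen_add_r : ∀ j, gen (j + (r : ZMod (2 * r))) = (gen j)⁻¹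
  denom_ne_zero : ∀ j, ∀ z : ℂ, ¬ dist z (center j : ℂ) < radius j →
    (((gen j : Matrix (Fin 2) (Fin 2) ℝ) 1 0 : ℂ) * z +
        ((gen j : Matrix (Fin 2) (Fin 2) ℝ) 1 1 : ℂ)) ≠ 0
  maps_into : ∀ j, ∀ z : ℂ, ¬ dist z (center j : ℂ) < radius j →
    dist
        ((((gen j : Matrix (Fin 2) (Fin 2) ℝ) 0 0 : ℂ) * z +
            ((gen j : Matrix (Fin 2) (Fin 2) ℝ) 0 1 : ℂ)) /
          (((gen j : Matrix (Fin 2) (Fin 2) ℝ) 1 0 : ℂ) * z +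
            ((gen j : Matrix (Fin 2) (Fin 2) ℝ) 1 1 : ℂ)))
        ((center (j + (r : ZMod (2 * r))) : ℂ)) <
      radius (j + (r : ZMod (2 * r)))

/-- The element `T_σ = S_{σ(0)} S_{σ(1)} ⋯ S_{σ(n-1)}` associated to a word
`σ : ℤ/nℤ → ℤ/2rℤ`. -/
def Tword {r : ℕ} (D : SchottkyDatum r) {n : ℕ} (σ : ZMod n → ZMod (2 * r)) :
    Matrix.SpecialLinearGroup (Fin 2) ℝ :=
  ((List.finRange n).map fun i => D.gen (σ ((i : ℕ) : ZMod n))).prod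

/-- The inverse of `cosh` on `[1, ∞)`: `arcosh x = log (x + √(x² - 1))`. -/
noncomputable def arcosh (x : ℝ) : ℝ := Real.log (x + Real.sqrt (x ^ 2 - 1))

namespace SchottkyAux

/-- Numerator of the Möbius action. -/
def mnum (M : Matrix (Fin 2) (Fin 2) ℝ) (z : ℂ) : ℂ := (M 0 0 : ℂ) * z + (M 0 1 : ℂ)
/-- Denominator of the Möbius action. -/
def mden (M : Matrix (Fin 2) (Fin 2) ℝ) (z : ℂ) : ℂ := (M 1 0 : ℂ) * z + (M 1 1 : ℂ)
/-- Möbius action. -/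
noncomputable def moeb (M : Matrix (Fin 2) (Fin 2) ℝ) (z : ℂ) : ℂ := mnum M z / mden M z

lemma mden_mul (A B : Matrix (Fin 2) (Fin 2) ℝ) (z : ℂ) (h : mden B z ≠ 0) :
    mden (A * B) z = mden A (moeb B z) * mden B z := by
  simp only [mden, mnum, moeb] at h ⊢
  simp only [Matrix.mul_apply, Fin.sum_univ_two]
  push_cast
  field_simp
  ring

lemma mnum_mul (A B : Matrix (Fin 2) (Fin 2) ℝ) (z : ℂ) (h : mden B z ≠ 0) :
    mnum (A * B) z = mnum A (moeb B z) * mden B z := by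
  simp only [mden, mnum, moeb] at h ⊢
  simp only [Matrix.mul_apply, Fin.sum_univ_two]
  push_cast
  field_simp
  ring

lemma moeb_mul (A B : Matrix (Fin 2) (Fin 2) ℝ) (z : ℂ) (h : mden B z ≠ 0) :
    moeb (A * B) z = moeb A (moeb B z) := by
  have e : moeb (A * B) z = mnum A (moeb B z) * mden B z / (mden A (moeb B z) * mden B z) := by
    rw [moeb, mnum_mul A B z h, mden_mul A B z h]
  rw [e, mul_div_mul_right _ _ h]
  rfl

lemma trace_key (a b c d l u : ℝ) (hlu : l < u) (hdet : a * d - b * c = 1)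
    (hden : ∀ x, l ≤ x → x ≤ u → c * x + d ≠ 0)
    (hl : l < (a * l + b) / (c * l + d)) (hu : (a * u + b) / (c * u + d) < u) :
    2 < |a + d| := by
  by_contra hcon
  push_neg at hcon
  have habs := abs_le.mp hcon
  have htr : (a + d) ^ 2 ≤ 4 := by nlinarith [habs.1, habs.2]
  have hql : c * l + d ≠ 0 := hden l le_rfl hlu.le
  have hqu : c * u + d ≠ 0 := hden u hlu.le le_rfl
  -- the denominator does not change sign on [l,u]
  have hq : 0 < (c * l + d) * (c * u + d) := by
    rcases hql.lt_or_gt with h1 | h1 <;> rcases hqu.lt_or_gt with h2 | h2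
    · exact mul_pos_of_neg_of_neg h1 h2
    · exfalso
      have hc : 0 < c := by nlinarith
      refine hden (-d / c) ?_ ?_ ?_
      · rw [le_div_iff₀ hc]; nlinarith
      · rw [div_le_iff₀ hc]; nlinarith
      · have hc0 : c ≠ 0 := ne_of_gt hc
        field_simp
        ring
    · exfalso
      have hc : c < 0 := by nlinarith
      refine hden (-d / c) ?_ ?_ ?_
      · rw [le_div_iff_of_neg hc]; nlinarith
      · rw [div_le_iff_of_neg hc]; nlinarith
      · have hc0 : c ≠ 0 := ne_of_lt hc
        field_simp
        ring
    · exact mul_pos h1 h2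
  have h1' : 0 < (a * l + b - l * (c * l + d)) * (c * l + d) := by
    have e : (a * l + b) / (c * l + d) - l = (a * l + b - l * (c * l + d)) / (c * l + d) := by
      rw [sub_div, mul_div_cancel_right₀ _ hql]
    have h1 : 0 < (a * l + b - l * (c * l + d)) / (c * l + d) := by rw [← e]; linarith
    rcases div_pos_iff.mp h1 with ⟨x, y⟩ | ⟨x, y⟩
    · exact mul_pos x y
    · exact mul_pos_of_neg_of_neg x y
  have h2' : (a * u + b - u * (c * u + d)) * (c * u + d) < 0 := by
    have e : (a * u + b) / (c * u + d) - u = (a * u + b - u * (c * u + d)) / (c * u + d) := by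
      rw [sub_div, mul_div_cancel_right₀ _ hqu]
    have h2 : (a * u + b - u * (c * u + d)) / (c * u + d) < 0 := by rw [← e]; linarith
    rcases div_neg_iff.mp h2 with ⟨x, y⟩ | ⟨x, y⟩
    · exact mul_neg_of_pos_of_neg x y
    · exact mul_neg_of_neg_of_pos x y
  have hHlHu : (a * l + b - l * (c * l + d)) * (a * u + b - u * (c * u + d)) < 0 := by
    by_contra hcc
    push_neg at hcc
    have h6 := mul_nonneg hcc hq.le
    nlinarith [mul_neg_of_pos_of_neg h1' h2']
  rcases eq_or_ne c 0 with hc | hc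
  · subst hc
    have had : a * d = 1 := by linarith
    have h4 : a - d = 0 := by nlinarith [sq_nonneg (a - d)]
    have hEq : a = d := by linarith
    rw [hEq] at hHlHu
    nlinarith [sq_nonneg (d * l + b - l * d), hHlHu]
  · have hdisc : (a - d) ^ 2 + 4 * c * b ≤ 0 := by nlinarith
    have key1 : (-4 * c) * (a * l + b - l * (c * l + d)) =
        (-2 * c * l + (a - d)) ^ 2 - ((a - d) ^ 2 + 4 * c * b) := by ring
    have key2 : (-4 * c) * (a * u + b - u * (c * u + d)) =
        (-2 * c * u + (a - d)) ^ 2 - ((a - d) ^ 2 + 4 * c * b) := by ring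
    have hP : 0 ≤ (-4 * c) * (a * l + b - l * (c * l + d)) := by
      rw [key1]; linarith [sq_nonneg (-2 * c * l + (a - d))]
    have hQ : 0 ≤ (-4 * c) * (a * u + b - u * (c * u + d)) := by
      rw [key2]; linarith [sq_nonneg (-2 * c * u + (a - d))]
    have e2 := mul_nonneg hP hQ
    have h7 := mul_neg_of_pos_of_neg (mul_self_pos.mpr hc) hHlHu
    nlinarith [e2, h7]

/-- The matrix of a word. -/
def matL {r : ℕ} (D : SchottkyDatum r) (L : List (ZMod (2 * r))) :
    Matrix (Fin 2) (Fin 2) ℝ :=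
  (((L.map D.gen).prod : Matrix.SpecialLinearGroup (Fin 2) ℝ) : Matrix (Fin 2) (Fin 2) ℝ)

lemma matL_cons {r : ℕ} (D : SchottkyDatum r) (j : ZMod (2 * r)) (L : List (ZMod (2 * r))) :
    matL D (j :: L) = (D.gen j : Matrix (Fin 2) (Fin 2) ℝ) * matL D L := by
  simp [matL, List.prod_cons]

lemma r_add_r {r : ℕ} : (r : ZMod (2 * r)) + (r : ZMod (2 * r)) = 0 := by
  have h : ((r : ZMod (2 * r)) + (r : ZMod (2 * r))) = ((2 * r : ℕ) : ZMod (2 * r)) := by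
    push_cast
    ring
  rw [h, ZMod.natCast_self]

lemma key {r : ℕ} (D : SchottkyDatum r) (L : List (ZMod (2 * r))) :
    ∀ j : ZMod (2 * r),
      List.Chain (fun a b => b ≠ a + (r : ZMod (2 * r))) j L →
      ∀ m : ZMod (2 * r), (∀ x, (j :: L).getLast? = some x → m ≠ x) →
      ∀ z : ℂ, dist z (D.center m : ℂ) ≤ D.radius m →
      mden (matL D (j :: L)) z ≠ 0 ∧
        dist (moeb (matL D (j :: L)) z) (D.center (j + (r : ZMod (2 * r))) : ℂ) <
          D.radius (j + (r : ZMod (2 * r))) := by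
  induction L with
  | nil =>
    intro j _ m hm z hz
    have hmj : m ≠ j := hm j (by simp)
    have h1 : ¬ dist z (D.center j : ℂ) ≤ D.radius j := D.disks_disjoint m j hmj z hz
    have h2 : ¬ dist z (D.center j : ℂ) < D.radius j := fun h => h1 h.le
    have e : matL D [j] = (D.gen j : Matrix (Fin 2) (Fin 2) ℝ) := by simp [matL]
    rw [e]
    exact ⟨D.denom_ne_zero j z h2, D.maps_into j z h2⟩
  | cons k L' IH =>
    intro j hchain m hm z hz
    rw [List.Chain, List.chain_cons] at hchain
    obtain ⟨hjk, hchain'⟩ := hchain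
    have hm' : ∀ x, (k :: L').getLast? = some x → m ≠ x := by
      intro x hx
      exact hm x (by rwa [List.getLast?_cons_cons])
    obtain ⟨ihden, ihmem⟩ := IH k hchain' m hm' z hz
    set w := moeb (matL D (k :: L')) z with hw
    have hkr : k + (r : ZMod (2 * r)) ≠ j := by
      intro h
      apply hjk
      rw [← h, add_assoc, r_add_r, add_zero]
    have hw1 : ¬ dist w (D.center j : ℂ) ≤ D.radius j :=
      D.disks_disjoint (k + (r : ZMod (2 * r))) j hkr w ihmem.le
    have hw2 : ¬ dist w (D.center j : ℂ) < D.radius j := fun h => hw1 h.le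
    have hd1 : mden (D.gen j : Matrix (Fin 2) (Fin 2) ℝ) w ≠ 0 := D.denom_ne_zero j w hw2
    have hd2 := D.maps_into j w hw2
    rw [matL_cons]
    constructor
    · rw [mden_mul _ _ _ ihden]
      exact mul_ne_zero hd1 ihden
    · rw [moeb_mul _ _ _ ihden]
      exact hd2

end SchottkyAux

open SchottkyAux in
/-- Given a Schottky datum with `r ≥ 1` generators, every cyclically admissible word of
length `n ≥ 1` gives a hyperbolic element: `|tr T_σ| > 2`, so the geodesic length
`ℓ(T_σ) = 2 arccosh (|tr T_σ| / 2)` is well defined and strictly positive. -/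
theorem stmt9 (r : ℕ) (hr : 1 ≤ r) (D : SchottkyDatum r) (n : ℕ) (hn : 1 ≤ n)
    (σ : ZMod n → ZMod (2 * r))
    (hσ : ∀ i : ZMod n, σ (i + 1) ≠ σ i + (r : ZMod (2 * r))) :
    2 < |Matrix.trace ((Tword D σ : Matrix (Fin 2) (Fin 2) ℝ))| ∧
    0 < 2 * arcosh (|Matrix.trace ((Tword D σ : Matrix (Fin 2) (Fin 2) ℝ))| / 2) := by
  obtain ⟨nm, rfl⟩ : ∃ nm, n = nm + 1 := ⟨n - 1, (Nat.succ_pred_eq_of_pos hn).symm⟩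
  set g : ℕ → ZMod (2 * r) := fun i => σ ((i : ℕ) : ZMod (nm + 1)) with hg
  set L : List (ZMod (2 * r)) := (List.range (nm + 1)).map g with hL
  -- the word matrix is the matrix of the list `L`
  have hTword : ((Tword D σ : Matrix (Fin 2) (Fin 2) ℝ)) = matL D L := by
    have e : L.map D.gen = (List.finRange (nm + 1)).map
        fun i => D.gen (σ ((i : ℕ) : ZMod (nm + 1))) := by
      rw [hL, List.map_map]
      symm
      simp only [bind_pure_comp, List.map_eq_map, List.map_map, ← List.map_coe_finRange_eq_range]
      simp [hg, Function.comp]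
    rw [Tword, matL, e]
  -- cons structure of `L`
  have hLdef : L = g 0 :: (List.range nm).map (fun i => g (i + 1)) := by
    rw [hL, List.range_succ_eq_map, List.map_cons, List.map_map]
    rfl
  -- chain condition
  have hchain : List.Chain (fun a b => b ≠ a + (r : ZMod (2 * r))) (g 0)
      ((List.range nm).map fun i => g (i + 1)) := by
    have h1 : List.Chain' (fun a b : ℕ => g b ≠ g a + (r : ZMod (2 * r)))
        (List.range (nm + 1)) := by
      show List.IsChain _ _
      rw [List.isChain_range_succ]
      intro i _
      have e : ((i + 1 : ℕ) : ZMod (nm + 1)) = ((i : ℕ) : ZMod (nm + 1)) + 1 := by push_cast; ring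
      rw [hg]
      simp only
      rw [e]
      exact hσ _
    have h2 := (List.isChain_map (R := fun a b => b ≠ a + (r : ZMod (2 * r))) g).mpr h1
    rw [← hL, hLdef] at h2
    exact h2
  -- the last letter of `L`
  have hlast : L.getLast? = some (g nm) := by
    rw [hL, List.range_succ, List.map_append]
    simp
  -- σ(0) + r avoids the last disk
  set m₀ : ZMod (2 * r) := g 0 + (r : ZMod (2 * r)) with hm₀
  have hm0last : m₀ ≠ g nm := by
    have h0 : ((nm : ZMod (nm + 1)) + 1) = 0 := by
      have : ((nm + 1 : ℕ) : ZMod (nm + 1)) = 0 := ZMod.natCast_self _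
      push_cast at this
      exact this
    have h1 := hσ (nm : ZMod (nm + 1))
    rw [h0] at h1
    -- h1 : σ 0 ≠ σ nm + r, i.e. g 0 ≠ g nm + r
    intro h
    apply h1
    have hgg0 : g 0 = σ 0 := by rw [hg]; norm_num
    have hggnm : g nm = σ ((nm : ℕ) : ZMod (nm + 1)) := rfl
    rw [← hgg0, ← hggnm, ← h, hm₀, add_assoc, r_add_r, add_zero]
  -- main geometric input
  set c₀ : ℝ := D.center m₀ with hc₀
  set ρ : ℝ := D.radius m₀ with hρ
  have hρpos : 0 < ρ := D.radius_pos m₀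
  set M : Matrix (Fin 2) (Fin 2) ℝ := matL D L with hM
  have hmain : ∀ x : ℝ, c₀ - ρ ≤ x → x ≤ c₀ + ρ →
      mden M (x : ℂ) ≠ 0 ∧
        dist (moeb M (x : ℂ)) ((c₀ : ℂ)) < ρ := by
    intro x hx1 hx2
    have hdist : dist ((x : ℂ)) ((c₀ : ℂ)) = |x - c₀| := by
      rw [Complex.dist_eq, ← Complex.ofReal_sub, Complex.norm_real, Real.norm_eq_abs]
    have hz : dist ((x : ℂ)) (D.center m₀ : ℂ) ≤ D.radius m₀ := by
      rw [← hc₀, ← hρ, hdist]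
      rw [abs_le]
      constructor <;> linarith
    have hm : ∀ y, (g 0 :: (List.range nm).map (fun i => g (i + 1))).getLast? = some y →
        m₀ ≠ y := by
      intro y hy
      rw [← hLdef, hlast] at hy
      cases hy
      exact hm0last
    have := key D ((List.range nm).map (fun i => g (i + 1))) (g 0) hchain m₀ hm (x : ℂ) hz
    rw [← hLdef] at this
    rw [hM]
    refine ⟨this.1, ?_⟩
    have : dist (moeb (matL D L) ((x : ℂ)))
        (D.center (g 0 + (r : ZMod (2 * r))) : ℂ) < D.radius (g 0 + (r : ZMod (2 * r))) :=
      this.2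
    rwa [← hm₀, ← hc₀, ← hρ] at this
  -- translate to real entries
  set a : ℝ := M 0 0
  set b : ℝ := M 0 1
  set c : ℝ := M 1 0
  set d : ℝ := M 1 1
  have hdet : a * d - b * c = 1 := by
    have := (Tword D σ).prop
    rw [Matrix.det_fin_two] at this
    rw [hTword] at this
    exact this
  have hmden : ∀ x : ℝ, mden M (x : ℂ) = ((c * x + d : ℝ) : ℂ) := by
    intro x
    rw [mden]
    push_cast
    ring
  have hden : ∀ x : ℝ, c₀ - ρ ≤ x → x ≤ c₀ + ρ → c * x + d ≠ 0 := by
    intro x h1 h2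
    have := (hmain x h1 h2).1
    rw [hmden] at this
    exact_mod_cast fun h => this (by rw [h]; simp)
  have hval : ∀ x : ℝ, c₀ - ρ ≤ x → x ≤ c₀ + ρ →
      c₀ - ρ < (a * x + b) / (c * x + d) ∧ (a * x + b) / (c * x + d) < c₀ + ρ := by
    intro x h1 h2
    have h3 := (hmain x h1 h2).2
    have e : moeb M (x : ℂ) = (((a * x + b) / (c * x + d) : ℝ) : ℂ) := by
      rw [moeb, mnum, hmden]
      push_cast
      rfl
    rw [e] at h3
    have hdist : dist ((((a * x + b) / (c * x + d) : ℝ)) : ℂ) ((c₀ : ℂ))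
        = |(a * x + b) / (c * x + d) - c₀| := by
      rw [Complex.dist_eq, ← Complex.ofReal_sub, Complex.norm_real, Real.norm_eq_abs]
    rw [hdist, abs_lt] at h3
    constructor <;> linarith [h3.1, h3.2]
  have htrace : 2 < |a + d| := by
    refine trace_key a b c d (c₀ - ρ) (c₀ + ρ) (by linarith) hdet hden ?_ ?_
    · exact (hval (c₀ - ρ) le_rfl (by linarith)).1
    · exact (hval (c₀ + ρ) (by linarith) le_rfl).2
  have htr_eq : Matrix.trace ((Tword D σ : Matrix (Fin 2) (Fin 2) ℝ)) = a + d := by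
    rw [hTword, Matrix.trace_fin_two]
  rw [htr_eq]
  refine ⟨htrace, ?_⟩
  have h1 : 1 < |a + d| / 2 + Real.sqrt ((|a + d| / 2) ^ 2 - 1) := by
    have := Real.sqrt_nonneg ((|a + d| / 2) ^ 2 - 1)
    linarith
  have := Real.log_pos h1
  rw [arcosh]
  linarith
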